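/- The dimension of 𝔊_{r,s} over F satisfies, as an equality of real numbers, dim_F 𝔊_{r,s} = 2^{n−1} − 2^{(n−1)/2} · cos((n+1)π/4), where n = r + s and 2^{(n−1)/2} denotes the real power. -/

import Mathlib

/-
Setting (Eberlein, "Isometries of Clifford Algebras II"):
`F` a field with `char F ≠ 2`, `n = r + s > 0`, and `Cl(r,s)` the Clifford algebra of `F^n`
in which `eᵢ·eⱼ = -eⱼ·eᵢ` for `i ≠ j`, `eᵢ² = -1` for the first `r` indices and
`eᵢ² = +1` for the last `s` indices.
-/

open CliffordAlgebra

namespace CliffPaper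

/-- The quadratic form `q(x) = -x₁² - … - x_r² + x_{r+1}² + … + x_n²` on `F^(r+s)`. -/
noncomputable def Qf (F : Type*) [Field F] (r s : ℕ) : QuadraticForm F (Fin (r + s) → F) :=
  QuadraticMap.weightedSumSquares F (fun i : Fin (r + s) => if (i : ℕ) < r then (-1 : F) else 1)

/-- The Clifford algebra `Cl(r,s)`. -/
abbrev Cl (F : Type*) [Field F] (r s : ℕ) : Type _ := CliffordAlgebra (Qf F r s)

/-- The generator `e_i` of `Cl(r,s)` (`i` is a zero-based index, so `e_i² = -1` for `i < r`
and `e_i² = +1` for `r ≤ i`). -/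
noncomputable def gen (F : Type*) [Field F] (r s : ℕ) (i : Fin (r + s)) : Cl F r s :=
  ι (Qf F r s) (Pi.single i 1)

/-- For a multi-index `I = {i₁ < … < i_k}`, the product `e_I = e_{i₁} ⋯ e_{i_k}`. -/
noncomputable def eProd (F : Type*) [Field F] (r s : ℕ) (I : Finset (Fin (r + s))) : Cl F r s :=
  ((I.sort (· ≤ ·)).map (gen F r s)).prod

/-- Clifford conjugation: the unique anti-automorphism `c` of `Cl(r,s)` with `c ∘ c = id` and
`c(v) = -v` for all `v ∈ F^n`; concretely, reversal composed with the grade involution. -/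
noncomputable def conj (F : Type*) [Field F] (r s : ℕ) : Cl F r s →ₗ[F] Cl F r s :=
  (reverse (Q := Qf F r s)).comp (involute (Q := Qf F r s)).toLinearMap

theorem conj_mul (F : Type*) [Field F] (r s : ℕ) (a b : Cl F r s) :
    conj F r s (a * b) = conj F r s b * conj F r s a := by
  simp [conj, reverse.map_mul]

/-- `𝔊_{r,s} = {x ∈ Cl(r,s) : c(x) = -x}`, the `-1`-eigenspace of Clifford conjugation,
as an `F`-subspace of `Cl(r,s)`. -/
noncomputable def Gsub (F : Type*) [Field F] (r s : ℕ) : Submodule F (Cl F r s) :=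
  LinearMap.ker (conj F r s + LinearMap.id)

theorem mem_Gsub {F : Type*} [Field F] {r s : ℕ} (x : Cl F r s) :
    x ∈ Gsub F r s ↔ conj F r s x = -x := by
  simp [Gsub, LinearMap.mem_ker, add_eq_zero_iff_eq_neg]

section basics
variable (F : Type*) [Field F] (r s : ℕ)

lemma Qf_apply (x : Fin (r+s) → F) :
    Qf F r s x = ∑ i : Fin (r+s), (if ((i:Fin (r+s)) : ℕ) < r then (-1 : F) else 1) • (x i * x i) :=
  QuadraticMap.weightedSumSquares_apply _ _

lemma Qf_single (i : Fin (r+s)) :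
    Qf F r s (Pi.single i 1) = (if (i : ℕ) < r then (-1 : F) else 1) := by
  rw [Qf_apply]
  rw [Finset.sum_eq_single i]
  · simp
  · intro j _ hj
    simp [Pi.single_apply, hj]
  · simp

lemma polar_single (i j : Fin (r+s)) (h : i ≠ j) :
    QuadraticMap.polar (Qf F r s) (Pi.single i 1) (Pi.single j 1) = 0 := by
  unfold QuadraticMap.polar
  rw [Qf_apply, Qf_apply, Qf_apply, ← Finset.sum_sub_distrib, ← Finset.sum_sub_distrib]
  apply Finset.sum_eq_zero
  intro l _
  rcases eq_or_ne l i with rfl | hli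
  · simp [Pi.single_apply, h.symm]
  · rcases eq_or_ne l j with rfl | hlj
    · simp [Pi.single_apply, h, hli]
    · simp [Pi.single_apply, hli, hlj]

lemma gen_sq (i : Fin (r+s)) :
    gen F r s i * gen F r s i = algebraMap F _ (if (i : ℕ) < r then (-1 : F) else 1) := by
  rw [gen, ι_sq_scalar, Qf_single]

lemma gen_anticomm {i j : Fin (r+s)} (h : i ≠ j) :
    gen F r s i * gen F r s j = -(gen F r s j * gen F r s i) := by
  have := ι_mul_ι_comm (Q := Qf F r s) (Pi.single i 1) (Pi.single j 1)
  rw [polar_single F r s i j h] at this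
  simpa [gen] using this

end basics

section lists
variable (F : Type*) [Field F] (r s : ℕ)

/-- product of generators along a list -/
noncomputable def pgen (l : List (Fin (r+s))) : Cl F r s := (l.map (gen F r s)).prod

@[simp] lemma pgen_nil : pgen F r s [] = 1 := rfl

@[simp] lemma pgen_cons (a : Fin (r+s)) (l : List (Fin (r+s))) :
    pgen F r s (a :: l) = gen F r s a * pgen F r s l := by
  simp [pgen]

lemma eProd_eq_pgen (I : Finset (Fin (r+s))) : eProd F r s I = pgen F r s (I.sort (· ≤ ·)) := rfl

end lists

section lists2
variable (F : Type*) [Field F] (r s : ℕ)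

lemma pgen_mul_gen (a : Fin (r+s)) :
    ∀ (l : List (Fin (r+s))), a ∉ l →
      pgen F r s l * gen F r s a = ((-1 : F) ^ l.length) • (gen F r s a * pgen F r s l)
  | [], _ => by simp
  | b :: u, h => by
    have hab : a ∉ u := fun hu => h (List.mem_cons_of_mem _ hu)
    have hba : b ≠ a := fun he => h (he ▸ List.mem_cons_self)
    calc pgen F r s (b :: u) * gen F r s a
        = gen F r s b * (pgen F r s u * gen F r s a) := by rw [pgen_cons, mul_assoc]
      _ = gen F r s b * (((-1:F) ^ u.length) • (gen F r s a * pgen F r s u)) := by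
          rw [pgen_mul_gen a u hab]
      _ = ((-1:F) ^ u.length) • (gen F r s b * gen F r s a * pgen F r s u) := by
          rw [mul_smul_comm, mul_assoc]
      _ = ((-1:F) ^ u.length) • (-(gen F r s a * gen F r s b) * pgen F r s u) := by
          rw [gen_anticomm F r s hba]
      _ = ((-1:F) ^ (b :: u).length) • (gen F r s a * pgen F r s (b :: u)) := by
          rw [pgen_cons, neg_mul, smul_neg, ← neg_smul, List.length_cons, pow_succ,
            mul_neg_one, mul_assoc]

lemma pgen_reverse :
    ∀ (l : List (Fin (r+s))), l.Nodup →
      pgen F r s l.reverse = ((-1 : F) ^ (l.length.choose 2)) • pgen F r s l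
  | [], _ => by simp
  | a :: t, h => by
    have ht : t.Nodup := (List.nodup_cons.mp h).2
    have hat : a ∉ t := (List.nodup_cons.mp h).1
    have : pgen F r s ((a :: t).reverse) = pgen F r s t.reverse * gen F r s a := by
      simp [pgen, List.prod_append]
    rw [this, pgen_reverse t ht, smul_mul_assoc, pgen_mul_gen F r s a t hat, smul_smul,
      ← pgen_cons, ← pow_add, List.length_cons]
    congr 2
    have : (t.length + 1).choose 2 = t.length.choose 1 + t.length.choose 2 :=
      Nat.choose_succ_succ _ _
    rw [this, Nat.choose_one_right, add_comm]

lemma involute_pgen (l : List (Fin (r+s))) :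
    involute (pgen F r s l) = ((-1 : F) ^ l.length) • pgen F r s l := by
  have h1 : pgen F r s l = ((l.map (fun i => Pi.single i (1:F))).map (ι (Qf F r s))).prod := by
    rw [pgen, List.map_map]; rfl
  rw [h1, involute_prod_map_ι]
  simp

lemma reverse_pgen (l : List (Fin (r+s))) :
    reverse (Q := Qf F r s) (pgen F r s l) = pgen F r s l.reverse := by
  have h1 : pgen F r s l = ((l.map (fun i => Pi.single i (1:F))).map (ι (Qf F r s))).prod := by
    rw [pgen, List.map_map]; rfl
  rw [h1, reverse_prod_map_ι, ← List.map_reverse, ← List.map_reverse, List.map_map]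
  rfl

/-- parity of the conjugation sign -/
lemma sign4 (k : ℕ) :
    ((-1 : F) ^ (k + k.choose 2)) = if (k % 4 = 1 ∨ k % 4 = 2) then (-1 : F) else 1 := by
  induction k using Nat.strong_induction_on with
  | _ k ih =>
    match k with
    | 0 => norm_num
    | 1 => norm_num
    | 2 => norm_num [Nat.choose]
    | 3 => norm_num [Nat.choose]
    | (m+4) =>
      have c1 : ∀ n : ℕ, (n+1).choose 2 = n + n.choose 2 := fun n => by
        rw [Nat.choose_succ_succ n 1, Nat.choose_one_right]
      have h4 : (m+4) + (m+4).choose 2 = (m + m.choose 2) + (4*m+10) := by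
        rw [show m+4 = (m+3)+1 from rfl, c1, show m+3 = (m+2)+1 from rfl, c1,
          show m+2 = (m+1)+1 from rfl, c1, c1]
        omega
      have hmod : (m+4) % 4 = m % 4 := Nat.add_mod_right m 4
      rw [h4, pow_add, ih m (by omega), hmod]
      have : ((-1:F)) ^ (4*m+10) = 1 := by
        have : (4*m+10) = 2*(2*m+5) := by ring
        rw [this, pow_mul]; norm_num
      rw [this, mul_one]

lemma conj_pgen (l : List (Fin (r+s))) (h : l.Nodup) :
    conj F r s (pgen F r s l)
      = (if (l.length % 4 = 1 ∨ l.length % 4 = 2) then (-1:F) else 1) • pgen F r s l := by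
  show reverse (Q := Qf F r s) (involute (pgen F r s l)) = _
  rw [involute_pgen, map_smul, reverse_pgen, pgen_reverse F r s l h, smul_smul, ← pow_add,
    sign4]

lemma conj_eProd (I : Finset (Fin (r+s))) :
    conj F r s (eProd F r s I)
      = (if (I.card % 4 = 1 ∨ I.card % 4 = 2) then (-1:F) else 1) • eProd F r s I := by
  rw [eProd_eq_pgen, conj_pgen F r s _ (Finset.sort_nodup I (· ≤ ·)), Finset.length_sort]

end lists2

section span
variable (F : Type*) [Field F] (r s : ℕ)

lemma gen_mul_sorted (j : Fin (r+s)) :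
    ∀ (l : List (Fin (r+s))), l.Pairwise (· < ·) →
      ∃ (c : F) (l' : List (Fin (r+s))), l'.Pairwise (· < ·) ∧ (∀ x ∈ l', x = j ∨ x ∈ l) ∧
        gen F r s j * pgen F r s l = c • pgen F r s l'
  | [], _ => ⟨1, [j], by simp, by simp, by simp⟩
  | a :: t, hs => by
    have hts : t.Pairwise (· < ·) := hs.of_cons
    have ha : ∀ x ∈ t, a < x := (List.pairwise_cons.mp hs).1
    rcases lt_trichotomy j a with h | h | h
    · refine ⟨1, j :: a :: t, ?_, ?_, by simp⟩
      · rw [List.pairwise_cons]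
        refine ⟨?_, hs⟩
        intro b hb
        rcases List.mem_cons.mp hb with rfl | hb
        · exact h
        · exact h.trans (ha b hb)
      · intro x hx; exact List.mem_cons.mp hx
    · subst h
      refine ⟨(if (j : ℕ) < r then (-1:F) else 1), t, hts,
        fun x hx => Or.inr (List.mem_cons_of_mem _ hx), ?_⟩
      rw [pgen_cons, ← mul_assoc, gen_sq, Algebra.smul_def]
    · obtain ⟨c, l', hl's, hsub, heq⟩ := gen_mul_sorted j t hts
      refine ⟨-c, a :: l', ?_, ?_, ?_⟩
      · rw [List.pairwise_cons]
        refine ⟨?_, hl's⟩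
        intro b hb
        rcases hsub b hb with rfl | hb
        · exact h
        · exact ha b hb
      · intro x hx
        rcases List.mem_cons.mp hx with rfl | hx
        · exact Or.inr (List.mem_cons_self)
        · rcases hsub x hx with rfl | hx
          · exact Or.inl rfl
          · exact Or.inr (List.mem_cons_of_mem _ hx)
      · calc gen F r s j * pgen F r s (a :: t)
            = (gen F r s j * gen F r s a) * pgen F r s t := by rw [pgen_cons, mul_assoc]
          _ = -(gen F r s a * (gen F r s j * pgen F r s t)) := by
              rw [gen_anticomm F r s (ne_of_gt h), neg_mul, mul_assoc]
          _ = -(gen F r s a * (c • pgen F r s l')) := by rw [heq]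
          _ = (-c) • pgen F r s (a :: l') := by
              rw [pgen_cons, mul_smul_comm, ← neg_smul]

lemma sorted_pgen_eq (l : List (Fin (r+s))) (hl : l.Pairwise (· < ·)) :
    pgen F r s l = eProd F r s l.toFinset := by
  rw [eProd_eq_pgen]
  congr 1
  exact ((List.toFinset_sort (· ≤ ·) hl.nodup).mpr (hl.imp le_of_lt)).symm

lemma gen_mul_mem_span (j : Fin (r+s)) (x : Cl F r s)
    (hx : x ∈ Submodule.span F (Set.range (eProd F r s))) :
    gen F r s j * x ∈ Submodule.span F (Set.range (eProd F r s)) := by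
  induction hx using Submodule.span_induction with
  | mem y hy =>
    obtain ⟨I, rfl⟩ := hy
    obtain ⟨c, l', hl's, _, heq⟩ :=
      gen_mul_sorted F r s j (I.sort (· ≤ ·)) (Finset.sortedLT_sort I).pairwise
    rw [eProd_eq_pgen, heq, sorted_pgen_eq F r s l' hl's]
    exact Submodule.smul_mem _ _ (Submodule.subset_span ⟨_, rfl⟩)
  | zero => simpa using Submodule.zero_mem _
  | add y z _ _ hy hz => rw [mul_add]; exact Submodule.add_mem _ hy hz
  | smul a y _ hy => rw [mul_smul_comm]; exact Submodule.smul_mem _ _ hy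

lemma ι_eq_sum (v : Fin (r+s) → F) :
    ι (Qf F r s) v = ∑ i, v i • gen F r s i := by
  have hv : v = ∑ i, v i • (Pi.single i 1 : Fin (r+s) → F) := by
    ext j
    simp [Pi.single_apply, Finset.sum_ite_eq' Finset.univ j]
  conv_lhs => rw [hv]
  rw [map_sum]
  simp [gen]

lemma span_eProd_eq_top :
    Submodule.span F (Set.range (eProd F r s)) = ⊤ := by
  set S := Submodule.span F (Set.range (eProd F r s)) with hS
  have h1 : (1 : Cl F r s) ∈ S := by
    refine Submodule.subset_span ⟨∅, ?_⟩
    simp [eProd, Finset.sort_empty]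
  rw [eq_top_iff]
  intro x _
  have key : ∀ y : Cl F r s, ∀ z ∈ S, y * z ∈ S := by
    intro y
    induction y using CliffordAlgebra.induction with
    | algebraMap r' =>
      intro z hz
      rw [Algebra.algebraMap_eq_smul_one, smul_mul_assoc, one_mul]
      exact Submodule.smul_mem _ _ hz
    | ι v =>
      intro z hz
      rw [ι_eq_sum, Finset.sum_mul]
      refine Submodule.sum_mem _ fun i _ => ?_
      rw [smul_mul_assoc]
      exact Submodule.smul_mem _ _ (gen_mul_mem_span F r s i z hz)
    | mul a b hha hhb =>
      intro z hz
      rw [mul_assoc]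
      exact hha _ (hhb z hz)
    | add a b hha hhb =>
      intro z hz
      rw [add_mul]
      exact Submodule.add_mem _ (hha z hz) (hhb z hz)
  simpa using key x 1 h1

end span

section alpha
variable (F : Type*) [Field F] (r s : ℕ)

/-- the linear isometry negating the coordinates in `J` -/
noncomputable def negIso (J : Finset (Fin (r+s))) : (Qf F r s) →qᵢ (Qf F r s) where
  toLinearMap := LinearMap.pi
    (fun i => (if i ∈ J then (-1:F) else 1) • LinearMap.proj i)
  map_app' := by
    intro m
    show Qf F r s (fun i => ((if i ∈ J then (-1:F) else 1) • LinearMap.proj (R := F)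
      (φ := fun _ : Fin (r+s) => F) i) m) = Qf F r s m
    rw [Qf_apply, Qf_apply]
    refine Finset.sum_congr rfl fun i _ => ?_
    simp only [LinearMap.smul_apply, LinearMap.proj_apply, smul_eq_mul]
    by_cases h : i ∈ J <;> simp [h]

/-- the algebra automorphism negating the generators in `J` -/
noncomputable def alphaJ (J : Finset (Fin (r+s))) : Cl F r s →ₐ[F] Cl F r s :=
  CliffordAlgebra.map (negIso F r s J)

lemma alphaJ_gen (J : Finset (Fin (r+s))) (i : Fin (r+s)) :
    alphaJ F r s J (gen F r s i) = (if i ∈ J then (-1:F) else 1) • gen F r s i := by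
  rw [alphaJ, gen, CliffordAlgebra.map_apply_ι, ← map_smul]
  congr 1
  show LinearMap.pi _ (Pi.single i 1) = _
  ext j
  simp only [LinearMap.pi_apply, LinearMap.smul_apply, LinearMap.proj_apply, Pi.smul_apply,
    smul_eq_mul]
  rcases eq_or_ne j i with rfl | h
  · rfl
  · simp [Pi.single_apply, h]

lemma prod_smul_gen (c : Fin (r+s) → F) :
    ∀ l : List (Fin (r+s)),
      (l.map (fun i => c i • gen F r s i)).prod = (l.map c).prod • pgen F r s l
  | [] => by simp
  | a :: t => by
    rw [List.map_cons, List.prod_cons, prod_smul_gen c t, List.map_cons, List.prod_cons,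
      pgen_cons, smul_mul_assoc, mul_smul_comm, smul_smul]

lemma prod_ite_neg (A B : Finset (Fin (r+s))) :
    (∏ i ∈ A, (if i ∈ B then (-1:F) else 1)) = (-1 : F) ^ ((A ∩ B).card) := by
  rw [← Finset.prod_filter_mul_prod_filter_not A (· ∈ B)]
  have h1 : (∏ i ∈ A.filter (· ∈ B), (if i ∈ B then (-1:F) else 1)) = (-1:F) ^ ((A ∩ B).card) := by
    rw [← Finset.filter_mem_eq_inter]
    rw [Finset.prod_congr rfl (fun i hi => if_pos (Finset.mem_filter.mp hi).2)]
    exact Finset.prod_const _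
  have h2 : (∏ i ∈ A.filter (¬ · ∈ B), (if i ∈ B then (-1:F) else 1)) = 1 := by
    rw [Finset.prod_congr rfl (fun i hi => if_neg (Finset.mem_filter.mp hi).2)]
    exact Finset.prod_const_one
  rw [h1, h2, mul_one]

lemma alphaJ_eProd (J I : Finset (Fin (r+s))) :
    alphaJ F r s J (eProd F r s I) = ((-1:F) ^ ((I ∩ J).card)) • eProd F r s I := by
  rw [eProd_eq_pgen, pgen, map_list_prod, List.map_map]
  have : (List.map (⇑(alphaJ F r s J) ∘ gen F r s) (I.sort (· ≤ ·)))
      = List.map (fun i => (if i ∈ J then (-1:F) else 1) • gen F r s i) (I.sort (· ≤ ·)) := by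
    refine List.map_congr_left fun i _ => ?_
    exact alphaJ_gen F r s J i
  rw [this, prod_smul_gen]
  congr 1
  have hperm : ((I.sort (· ≤ ·)).map (fun i => if i ∈ J then (-1:F) else 1)).prod
      = ∏ i ∈ I, (if i ∈ J then (-1:F) else 1) := by
    rw [← Finset.prod_map_toList]
    exact List.Perm.prod_eq (List.Perm.map _ (Finset.sort_perm_toList I _))
  rw [hperm, prod_ite_neg]

lemma sum_orth (I I₀ : Finset (Fin (r+s))) :
    (∑ J : Finset (Fin (r+s)), (-1:F) ^ ((I ∩ J).card) * (-1:F) ^ ((I₀ ∩ J).card))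
      = if I = I₀ then (2:F) ^ (r+s) else 0 := by
  have key : ∀ J : Finset (Fin (r+s)),
      (-1:F) ^ ((I ∩ J).card) * (-1:F) ^ ((I₀ ∩ J).card)
        = ∏ a ∈ J, ((if a ∈ I then (-1:F) else 1) * (if a ∈ I₀ then (-1:F) else 1)) := by
    intro J
    rw [Finset.prod_mul_distrib, prod_ite_neg, prod_ite_neg, Finset.inter_comm J I,
      Finset.inter_comm J I₀]
  rw [Finset.sum_congr rfl fun J _ => key J]
  have := Fintype.prod_add
    (fun a : Fin (r+s) => (if a ∈ I then (-1:F) else 1) * (if a ∈ I₀ then (-1:F) else 1))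
    (fun _ => (1:F))
  simp only [Finset.prod_const_one, mul_one] at this
  rw [← this]
  rcases eq_or_ne I I₀ with rfl | hne
  · rw [if_pos rfl]
    have : ∀ a : Fin (r+s),
        (if a ∈ I then (-1:F) else 1) * (if a ∈ I then (-1:F) else 1) + 1 = 2 := by
      intro a; by_cases h : a ∈ I <;> norm_num [h]
    rw [Finset.prod_congr rfl fun a _ => this a, Finset.prod_const]
    simp
  · rw [if_neg hne]
    have : ∃ a, ¬ (a ∈ I ↔ a ∈ I₀) := by
      by_contra hc
      push_neg at hc
      exact hne (Finset.ext fun a => hc a)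
    obtain ⟨a, ha⟩ := this
    refine Finset.prod_eq_zero (Finset.mem_univ a) ?_
    by_cases h1 : a ∈ I <;> by_cases h2 : a ∈ I₀
    · exact absurd (iff_of_true h1 h2) ha
    · norm_num [h1, h2]
    · norm_num [h1, h2]
    · exact absurd (iff_of_false h1 h2) ha

end alpha

section indep
variable (F : Type*) [Field F] (r s : ℕ)

lemma pgen_append (l₁ l₂ : List (Fin (r+s))) :
    pgen F r s (l₁ ++ l₂) = pgen F r s l₁ * pgen F r s l₂ := by
  rw [pgen, pgen, pgen, List.map_append, List.prod_append]

lemma pgen_mul_reverse :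
    ∀ l : List (Fin (r+s)), ∃ c : F, c ≠ 0 ∧
      pgen F r s l * pgen F r s l.reverse = algebraMap F (Cl F r s) c
  | [] => ⟨1, one_ne_zero, by simp⟩
  | a :: t => by
    obtain ⟨c, hc, h⟩ := pgen_mul_reverse t
    set w : F := if (a : ℕ) < r then (-1:F) else 1 with hw
    have hwne : w ≠ 0 := by
      rw [hw]; split <;> norm_num
    refine ⟨c * w, mul_ne_zero hc hwne, ?_⟩
    have hrev : (a :: t).reverse = t.reverse ++ [a] := by simp
    rw [hrev, pgen_append, pgen_cons, mul_assoc, ← mul_assoc (pgen F r s t), h]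
    have : pgen F r s [a] = gen F r s a := by simp [pgen]
    rw [this, Algebra.commutes c (gen F r s a), ← mul_assoc, gen_sq, ← hw,
      ← map_mul, mul_comm w c]

lemma nontrivialCl (hF : ringChar F ≠ 2) : Nontrivial (Cl F r s) := by
  letI : Invertible (2 : F) := invertibleOfNonzero (Ring.two_ne_zero hF)
  exact (equivExterior (Qf F r s)).toEquiv.nontrivial

lemma eProd_ne_zero (hF : ringChar F ≠ 2) (I : Finset (Fin (r+s))) :
    eProd F r s I ≠ 0 := by
  haveI : Nontrivial (Cl F r s) := nontrivialCl F r s hF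
  obtain ⟨c, hc, h⟩ := pgen_mul_reverse F r s (I.sort (· ≤ ·))
  intro h0
  rw [eProd_eq_pgen] at h0
  rw [h0, zero_mul] at h
  exact hc ((algebraMap F (Cl F r s)).injective (by rw [← h, map_zero]))

theorem eProd_li (hF : ringChar F ≠ 2) : LinearIndependent F (eProd F r s) := by
  have h2 : (2:F) ≠ 0 := Ring.two_ne_zero hF
  rw [linearIndependent_iff']
  intro t g hsum I₀ hI₀
  have hcast : ∀ J, alphaJ F r s J (∑ I ∈ t, g I • eProd F r s I)
      = ∑ I ∈ t, (g I * (-1:F) ^ ((I ∩ J).card)) • eProd F r s I := by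
    intro J
    rw [map_sum]
    exact Finset.sum_congr rfl fun I _ => by rw [map_smul, alphaJ_eProd, smul_smul]
  have hcomp : ∑ J : Finset (Fin (r+s)), ((-1:F) ^ ((I₀ ∩ J).card)) •
      alphaJ F r s J (∑ I ∈ t, g I • eProd F r s I)
      = ((2:F) ^ (r+s) * g I₀) • eProd F r s I₀ := by
    calc ∑ J : Finset (Fin (r+s)), ((-1:F) ^ ((I₀ ∩ J).card)) •
        alphaJ F r s J (∑ I ∈ t, g I • eProd F r s I)
        = ∑ J : Finset (Fin (r+s)), ∑ I ∈ t,
            ((-1:F) ^ ((I₀ ∩ J).card) * (g I * (-1:F) ^ ((I ∩ J).card))) • eProd F r s I := by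
          refine Finset.sum_congr rfl fun J _ => ?_
          rw [hcast J, Finset.smul_sum]
          exact Finset.sum_congr rfl fun I _ => by rw [smul_smul]
      _ = ∑ I ∈ t, ∑ J : Finset (Fin (r+s)),
            ((-1:F) ^ ((I₀ ∩ J).card) * (g I * (-1:F) ^ ((I ∩ J).card))) • eProd F r s I :=
          Finset.sum_comm
      _ = ∑ I ∈ t, (g I * ∑ J : Finset (Fin (r+s)),
            (-1:F) ^ ((I ∩ J).card) * (-1:F) ^ ((I₀ ∩ J).card)) • eProd F r s I := by
          refine Finset.sum_congr rfl fun I _ => ?_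
          rw [← Finset.sum_smul]
          congr 1
          rw [Finset.mul_sum]
          exact Finset.sum_congr rfl fun J _ => by ring
      _ = ∑ I ∈ t, (g I * if I = I₀ then (2:F) ^ (r+s) else 0) • eProd F r s I := by
          refine Finset.sum_congr rfl fun I _ => ?_
          rw [sum_orth]
      _ = ((2:F) ^ (r+s) * g I₀) • eProd F r s I₀ := by
          rw [Finset.sum_eq_single I₀]
          · rw [if_pos rfl, mul_comm]
          · intro I _ hne
            rw [if_neg hne, mul_zero, zero_smul]
          · intro h
            exact absurd hI₀ h
  rw [Finset.sum_congr rfl fun J _ => by rw [hsum, map_zero, smul_zero]] at hcomp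
  rw [Finset.sum_const_zero] at hcomp
  rcases smul_eq_zero.mp hcomp.symm with h | h
  · rcases mul_eq_zero.mp h with h | h
    · exact absurd h (pow_ne_zero _ h2)
    · exact h
  · exact absurd h (eProd_ne_zero F r s hF I₀)

end indep

section gsub
variable (F : Type*) [Field F] (r s : ℕ)

lemma Gsub_eq_span (hF : ringChar F ≠ 2) :
    Gsub F r s = Submodule.span F
      (eProd F r s '' {I | I.card % 4 = 1 ∨ I.card % 4 = 2}) := by
  have h2 : (2:F) ≠ 0 := Ring.two_ne_zero hF
  apply le_antisymm
  · intro x hx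
    rw [mem_Gsub] at hx
    have hxtop : x ∈ Submodule.span F (Set.range (eProd F r s)) := by
      rw [span_eProd_eq_top]; exact Submodule.mem_top
    obtain ⟨cf, hcx⟩ := (Submodule.mem_span_range_iff_exists_fun F).mp hxtop
    have hsum0 : ∑ I : Finset (Fin (r+s)),
        (cf I * (if (I.card % 4 = 1 ∨ I.card % 4 = 2) then (-1:F) else 1) + cf I)
          • eProd F r s I = 0 := by
      have hconj : conj F r s x = ∑ I : Finset (Fin (r+s)),
          (cf I * (if (I.card % 4 = 1 ∨ I.card % 4 = 2) then (-1:F) else 1))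
            • eProd F r s I := by
        rw [← hcx, map_sum]
        exact Finset.sum_congr rfl fun I _ => by rw [map_smul, conj_eProd, smul_smul]
      have : ∑ I : Finset (Fin (r+s)),
          (cf I * (if (I.card % 4 = 1 ∨ I.card % 4 = 2) then (-1:F) else 1) + cf I)
            • eProd F r s I = conj F r s x + x := by
        rw [hconj, ← hcx, ← Finset.sum_add_distrib]
        exact Finset.sum_congr rfl fun I _ => by rw [add_smul]
      rw [this, hx, neg_add_cancel]
    have hcoef := linearIndependent_iff'.mp (eProd_li F r s hF) Finset.univ _ hsum0
    rw [← hcx]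
    refine Submodule.sum_mem _ fun I _ => ?_
    by_cases hI : (I.card % 4 = 1 ∨ I.card % 4 = 2)
    · exact Submodule.smul_mem _ _ (Submodule.subset_span ⟨I, hI, rfl⟩)
    · have h0 := hcoef I (Finset.mem_univ I)
      rw [if_neg hI, mul_one] at h0
      have : cf I = 0 := by
        have : (2:F) * cf I = 0 := by rw [two_mul]; exact h0
        rcases mul_eq_zero.mp this with h | h
        · exact absurd h h2
        · exact h
      rw [this, zero_smul]
      exact Submodule.zero_mem _
  · rw [Submodule.span_le]
    rintro x ⟨I, hI, rfl⟩
    rw [SetLike.mem_coe, mem_Gsub, conj_eProd,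
      if_pos (show I.card % 4 = 1 ∨ I.card % 4 = 2 from hI), neg_one_smul]

lemma finrank_Gsub (hF : ringChar F ≠ 2) :
    Module.finrank F (Gsub F r s)
      = (Finset.univ.filter
          (fun I : Finset (Fin (r+s)) => I.card % 4 = 1 ∨ I.card % 4 = 2)).card := by
  rw [Gsub_eq_span F r s hF, Set.image_eq_range]
  have hli := (eProd_li F r s hF).comp
    (Subtype.val : {I : Finset (Fin (r+s)) // I.card % 4 = 1 ∨ I.card % 4 = 2} → _)
    Subtype.val_injective
  have h := finrank_span_eq_card hli
  simp only [Function.comp_def, Fintype.card_subtype] at h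
  exact h

end gsub

section counting

lemma card_good (n : ℕ) :
    (Finset.univ.filter (fun I : Finset (Fin n) => I.card % 4 = 1 ∨ I.card % 4 = 2)).card
      = ∑ k ∈ Finset.range (n+1), if (k % 4 = 1 ∨ k % 4 = 2) then n.choose k else 0 := by
  rw [Finset.card_eq_sum_card_fiberwise (f := Finset.card) (t := Finset.range (n+1))
    (fun I _ => Finset.mem_range.mpr (Nat.lt_succ_of_le (by
      simpa using Finset.card_le_univ I)))]
  refine Finset.sum_congr rfl fun k _ => ?_
  rw [Finset.filter_filter]
  by_cases hgk : (k % 4 = 1 ∨ k % 4 = 2)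
  · rw [if_pos hgk]
    have heq : Finset.filter
        (fun I : Finset (Fin n) => (I.card % 4 = 1 ∨ I.card % 4 = 2) ∧ I.card = k)
        Finset.univ = Finset.filter (fun I => I.card = k) Finset.univ := by
      refine Finset.filter_congr fun I _ => ?_
      exact ⟨fun h => h.2, fun h => ⟨h ▸ hgk, h⟩⟩
    rw [heq, ← Finset.powerset_univ, ← Finset.powersetCard_eq_filter,
      Finset.card_powersetCard, Finset.card_fin]
  · rw [if_neg hgk, Finset.filter_false_of_mem, Finset.card_empty]
    intro I _ hI
    exact hgk (hI.2 ▸ hI.1)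

lemma weight_eq (k : ℕ) :
    (if (k % 4 = 1 ∨ k % 4 = 2) then (1:ℂ) else 0)
      = 1/2 - ((1 + Complex.I) * Complex.I ^ k + (1 - Complex.I) * (-Complex.I) ^ k)/4 := by
  have hd : k = 4 * (k / 4) + k % 4 := (Nat.div_add_mod k 4).symm
  have hI4 : (Complex.I : ℂ) ^ (4 * (k / 4)) = 1 := by
    rw [pow_mul, Complex.I_pow_four, one_pow]
  have hI4' : ((-Complex.I : ℂ)) ^ (4 * (k / 4)) = 1 := by
    rw [pow_mul, Even.neg_pow (⟨2, rfl⟩ : Even 4), Complex.I_pow_four, one_pow]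
  rw [show (Complex.I : ℂ) ^ k = Complex.I ^ (4 * (k / 4) + k % 4) from by rw [← hd],
    show ((-Complex.I : ℂ)) ^ k = (-Complex.I) ^ (4 * (k / 4) + k % 4) from by rw [← hd],
    pow_add, pow_add, hI4, hI4', one_mul, one_mul]
  have hlt : k % 4 < 4 := Nat.mod_lt k (by norm_num)
  interval_cases h : k % 4 <;> norm_num [pow_succ, Complex.ext_iff] <;> ring_nf <;>
    norm_num [Complex.ext_iff]

lemma one_add_I_pow (m : ℕ) :
    (1 + Complex.I) ^ m + (1 - Complex.I) ^ m
      = (((2:ℝ) ^ ((m:ℝ)/2) * (2 * Real.cos (m * Real.pi / 4)) : ℝ) : ℂ) := by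
  have hs2 : Real.sqrt 2 * (Real.sqrt 2 / 2) = 1 := by
    rw [mul_div_assoc']
    rw [Real.mul_self_sqrt (by norm_num : (0:ℝ) ≤ 2)]
    norm_num
  have hc : ((Real.sqrt 2 : ℝ) : ℂ) * ((Real.sqrt 2 / 2 : ℝ) : ℂ) = 1 := by
    rw [← Complex.ofReal_mul, hs2, Complex.ofReal_one]
  have h2 : ((Real.sqrt 2 : ℝ) : ℂ) * Complex.exp ((Real.pi/4 : ℝ) * Complex.I)
      = 1 + Complex.I := by
    rw [Complex.exp_mul_I, ← Complex.ofReal_cos, ← Complex.ofReal_sin,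
      Real.cos_pi_div_four, Real.sin_pi_div_four]
    linear_combination (1 + Complex.I) * hc
  have h3 : ((Real.sqrt 2 : ℝ) : ℂ) * Complex.exp ((-(Real.pi/4) : ℝ) * Complex.I)
      = 1 - Complex.I := by
    rw [Complex.exp_mul_I, ← Complex.ofReal_cos, ← Complex.ofReal_sin,
      Real.cos_neg, Real.sin_neg, Real.cos_pi_div_four, Real.sin_pi_div_four]
    push_cast
    push_cast at hc
    linear_combination (1 - Complex.I) * hc
  have e1 : (1 + Complex.I) ^ m
      = ((Real.sqrt 2 : ℝ) : ℂ) ^ m * Complex.exp (((m * Real.pi/4 : ℝ)) * Complex.I) := by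
    have harg : (m : ℂ) * (((Real.pi/4 : ℝ)) * Complex.I)
        = (((m * Real.pi/4 : ℝ)) : ℂ) * Complex.I := by push_cast; ring
    rw [← h2, mul_pow, ← Complex.exp_nat_mul, harg]
  have e2 : (1 - Complex.I) ^ m
      = ((Real.sqrt 2 : ℝ) : ℂ) ^ m * Complex.exp ((-(m * Real.pi/4 : ℝ)) * Complex.I) := by
    have harg : (m : ℂ) * (((-(Real.pi/4) : ℝ)) * Complex.I)
        = ((-(m * Real.pi/4 : ℝ)) : ℂ) * Complex.I := by push_cast; ring
    rw [← h3, mul_pow, ← Complex.exp_nat_mul, harg]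
  have hcos : Complex.exp (((m * Real.pi/4 : ℝ)) * Complex.I)
      + Complex.exp ((-(m * Real.pi/4 : ℝ)) * Complex.I)
      = 2 * Complex.cos ((m * Real.pi/4 : ℝ)) := by
    rw [Complex.two_cos]
  have hpow : ((Real.sqrt 2 : ℝ) : ℂ) ^ m = (((2:ℝ) ^ ((m:ℝ)/2) : ℝ) : ℂ) := by
    rw [← Complex.ofReal_pow]
    congr 1
    rw [Real.sqrt_eq_rpow, ← Real.rpow_natCast ((2:ℝ) ^ ((1:ℝ)/2)) m,
      ← Real.rpow_mul (by norm_num : (0:ℝ) ≤ 2)]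
    congr 1
    ring
  rw [e1, e2, ← mul_add, hcos, hpow]
  push_cast [Complex.ofReal_cos]
  ring

lemma count_complex (n : ℕ) :
    ((∑ k ∈ Finset.range (n+1), if (k % 4 = 1 ∨ k % 4 = 2) then n.choose k else 0 : ℕ) : ℂ)
      = (2:ℂ)^n/2
        - ((((2:ℝ) ^ ((((n:ℕ)+1 : ℕ):ℝ)/2)
            * (2 * Real.cos ((((n:ℕ)+1 : ℕ):ℝ) * Real.pi / 4)) : ℝ)) : ℂ)/4 := by
  have h1 : ((∑ k ∈ Finset.range (n+1), if (k % 4 = 1 ∨ k % 4 = 2) then n.choose k else 0 : ℕ) : ℂ)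
      = ∑ k ∈ Finset.range (n+1), (n.choose k : ℂ) * (if (k % 4 = 1 ∨ k % 4 = 2) then 1 else 0) := by
    push_cast
    exact Finset.sum_congr rfl fun k _ => by split <;> simp
  have hSa : ∑ k ∈ Finset.range (n+1), (n.choose k : ℂ) * Complex.I ^ k
      = (1 + Complex.I) ^ n := by
    have := add_pow Complex.I 1 n
    simp only [one_pow, mul_one] at this
    rw [show (1:ℂ) + Complex.I = Complex.I + 1 from add_comm _ _, this]
    exact Finset.sum_congr rfl fun k _ => by ring
  have hSb : ∑ k ∈ Finset.range (n+1), (n.choose k : ℂ) * (-Complex.I) ^ k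
      = (1 - Complex.I) ^ n := by
    have := add_pow (-Complex.I) 1 n
    simp only [one_pow, mul_one] at this
    rw [show (1:ℂ) - Complex.I = -Complex.I + 1 from by ring, this]
    exact Finset.sum_congr rfl fun k _ => by ring
  have hS1 : ∑ k ∈ Finset.range (n+1), (n.choose k : ℂ) = (2:ℂ)^n := by
    have := Nat.sum_range_choose n
    have h := congrArg (Nat.cast (R := ℂ)) this
    push_cast at h
    exact h
  rw [h1]
  calc ∑ k ∈ Finset.range (n+1), (n.choose k : ℂ) * (if (k % 4 = 1 ∨ k % 4 = 2) then 1 else 0)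
      = ∑ k ∈ Finset.range (n+1), ((n.choose k : ℂ)/2
          - (1+Complex.I) * ((n.choose k : ℂ) * Complex.I ^ k)/4
          - (1-Complex.I) * ((n.choose k : ℂ) * (-Complex.I) ^ k)/4) :=
        Finset.sum_congr rfl fun k _ => by rw [weight_eq]; ring
    _ = (∑ k ∈ Finset.range (n+1), (n.choose k : ℂ))/2
          - (1+Complex.I) * (∑ k ∈ Finset.range (n+1), (n.choose k : ℂ) * Complex.I ^ k)/4
          - (1-Complex.I) * (∑ k ∈ Finset.range (n+1), (n.choose k : ℂ) * (-Complex.I) ^ k)/4 := by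
        rw [Finset.sum_sub_distrib, Finset.sum_sub_distrib, ← Finset.sum_div, ← Finset.sum_div,
          ← Finset.mul_sum, ← Finset.sum_div, ← Finset.mul_sum]
    _ = (2:ℂ)^n/2 - ((1+Complex.I)^(n+1) + (1-Complex.I)^(n+1))/4 := by
        rw [hS1, hSa, hSb, pow_succ (1+Complex.I) n, pow_succ (1-Complex.I) n]
        ring
    _ = _ := by rw [one_add_I_pow (n+1)]

lemma count_real (n : ℕ) (hn : 0 < n) :
    ((∑ k ∈ Finset.range (n+1), if (k % 4 = 1 ∨ k % 4 = 2) then n.choose k else 0 : ℕ) : ℝ)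
      = 2 ^ (n - 1) - (2:ℝ) ^ (((n:ℝ) - 1)/2) * Real.cos (((n:ℝ) + 1) * Real.pi / 4) := by
  obtain ⟨m, rfl⟩ : ∃ m, n = m + 1 := ⟨n - 1, (Nat.succ_pred_eq_of_pos hn).symm⟩
  refine Complex.ofReal_inj.mp ?_
  have hC := count_complex (m+1)
  have hcast : ((((∑ k ∈ Finset.range (m+1+1),
      if (k % 4 = 1 ∨ k % 4 = 2) then (m+1).choose k else 0 : ℕ) : ℝ)) : ℂ)
      = ((∑ k ∈ Finset.range (m+1+1),
      if (k % 4 = 1 ∨ k % 4 = 2) then (m+1).choose k else 0 : ℕ) : ℂ) := by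
    push_cast
    exact Finset.sum_congr rfl fun k _ => by split <;> simp
  rw [hcast, hC]
  have hXr : (2:ℝ) ^ (((m+1+1 : ℕ):ℝ)/2) * (2 * Real.cos ((((m+1+1 : ℕ)):ℝ) * Real.pi / 4))/4
      = (2:ℝ) ^ ((((m+1:ℕ):ℝ) - 1)/2) * Real.cos ((((m+1:ℕ):ℝ) + 1) * Real.pi / 4) := by
    have harg : (((m+1+1 : ℕ)):ℝ) = ((m+1:ℕ):ℝ) + 1 := by push_cast; ring
    have hexp : (((m+1+1 : ℕ)):ℝ)/2 = (((m+1:ℕ):ℝ) - 1)/2 + 1 := by push_cast; ring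
    rw [hexp, harg, Real.rpow_add (by norm_num : (0:ℝ) < 2), Real.rpow_one]
    ring
  have h2n : (2:ℂ)^(m+1)/2 = (((2:ℝ)^(m+1-1) : ℝ) : ℂ) := by
    rw [show m+1-1 = m from rfl, pow_succ]
    push_cast
    ring
  rw [Complex.ofReal_sub]
  rw [← hXr, h2n]
  push_cast
  ring

end counting


attribute [local instance 100] LieRing.ofAssociativeRing

/-- `𝔊_{r,s}` as a Lie subalgebra of `Cl(r,s)` with the commutator bracket
`⁅x,y⁆ = x*y - y*x`. -/
noncomputable def GLie (F : Type*) [Field F] (r s : ℕ) : LieSubalgebra F (Cl F r s) where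
  toSubmodule := Gsub F r s
  lie_mem' := by
    intro x y hx hy
    have hx' : x ∈ Gsub F r s := hx
    have hy' : y ∈ Gsub F r s := hy
    show ⁅x, y⁆ ∈ Gsub F r s
    rw [mem_Gsub] at hx' hy' ⊢
    rw [Ring.lie_def, map_sub, conj_mul, conj_mul, hx', hy']
    noncomm_ring

/-- `𝔎_{r,s}`: the `+1`-eigenspace of `β` restricted to `𝔊_{r,s}`. -/
noncomputable def Ksub (F : Type*) [Field F] (r s : ℕ) (β : Cl F r s ≃ₐ[F] Cl F r s) :
    Submodule F (Cl F r s) :=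
  LinearMap.ker (β.toLinearMap - LinearMap.id) ⊓ Gsub F r s

/-- `𝔓_{r,s}`: the `-1`-eigenspace of `β` restricted to `𝔊_{r,s}`. -/
noncomputable def Psub (F : Type*) [Field F] (r s : ℕ) (β : Cl F r s ≃ₐ[F] Cl F r s) :
    Submodule F (Cl F r s) :=
  LinearMap.ker (β.toLinearMap + LinearMap.id) ⊓ Gsub F r s

/-- The center `𝔷(𝔎_{r,s}) = {x ∈ 𝔎_{r,s} : [x,y] = 0 for all y ∈ 𝔎_{r,s}}`. -/
noncomputable def ZKsub (F : Type*) [Field F] (r s : ℕ) (β : Cl F r s ≃ₐ[F] Cl F r s) :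
    Submodule F (Cl F r s) where
  carrier := {x | x ∈ Ksub F r s β ∧ ∀ y ∈ Ksub F r s β, x * y = y * x}
  zero_mem' := ⟨zero_mem _, fun y _ => by simp⟩
  add_mem' := fun {a b} ha hb => ⟨add_mem ha.1 hb.1, fun y hy => by
    rw [add_mul, mul_add, ha.2 y hy, hb.2 y hy]⟩
  smul_mem' := fun c a ha => ⟨Submodule.smul_mem _ c ha.1, fun y hy => by
    rw [smul_mul_assoc, mul_smul_comm, ha.2 y hy]⟩

/-- `𝔥_{r,s}`: the span of the `e_I` with `|I| ≡ 1, 2 (mod 4)` and `I ≠ {1,…,n}`. -/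
noncomputable def Hsub (F : Type*) [Field F] (r s : ℕ) : Submodule F (Cl F r s) :=
  Submodule.span F {x | ∃ I : Finset (Fin (r + s)), I.Nonempty ∧ I ≠ Finset.univ ∧
    (I.card % 4 = 1 ∨ I.card % 4 = 2) ∧ x = eProd F r s I}

/-- The volume element `ω = e₁e₂⋯e_n`. -/
noncomputable def omegaEl (F : Type*) [Field F] (r s : ℕ) : Cl F r s :=
  eProd F r s Finset.univ

/-- dim_F 𝔊_{r,s} = 2^(n-1) - 2^((n-1)/2) cos((n+1)π/4), n = r+s. -/
theorem statement4 (F : Type*) [Field F] (hF : ringChar F ≠ 2) (r s : ℕ) (hn : 0 < r + s) :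
    (Module.finrank F ↥(Gsub F r s) : ℝ)
      = 2 ^ (r + s - 1) -
        (2 : ℝ) ^ (((r + s : ℝ) - 1) / 2) * Real.cos (((r + s : ℝ) + 1) * Real.pi / 4) := by
  rw [finrank_Gsub F r s hF, card_good (r+s), count_real (r+s) hn]
  push_cast
  ring

end CliffPaper
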